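/- Let p be an odd prime, q = p^h, n ≥ 3, and set m = h·⌈(n−2)/2⌉. Then p^m divides |S_−|, the quotient |S_−|/p^m is not divisible by p (that is, p^m is the largest power of p dividing |S_−|), and 2·|S_−|/p^m ≡ 1 (mod q) or 2·|S_−|/p^m ≡ −1 (mod q). -/
import Mathlib

open Finset

section aux

variable {F : Type} [Field F] [Fintype F] [DecidableEq F]

private def Ncnt (F : Type) [Field F] [Fintype F] [DecidableEq F] (n : ℕ) (a : F) : ℕ :=
  (univ.filter fun x : Fin n → F => ∑ i, x i ^ 2 = a).card

private lemma sum_comp_eq {α : Type} [Fintype α] (Q : α → F) (f : F → ℤ) :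
    ∑ x : α, f (Q x) = ∑ a : F, ((univ.filter fun x => Q x = a).card : ℤ) * f a := by
  rw [← Finset.sum_fiberwise' univ Q f]
  refine Finset.sum_congr rfl fun a _ => ?_
  rw [Finset.sum_const, nsmul_eq_mul]

private lemma sum_sq_eq (hF2 : ringChar F ≠ 2) (f : F → ℤ) :
    ∑ y : F, f (y ^ 2) = ∑ b : F, (1 + quadraticChar F b) * f b := by
  rw [sum_comp_eq (fun y : F => y ^ 2) f]
  refine Finset.sum_congr rfl fun b _ => ?_
  have h := quadraticChar_card_sqrts hF2 b
  have : (univ.filter fun y : F => y ^ 2 = b) = {x : F | x ^ 2 = b}.toFinset := by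
    simp [Set.toFinset_setOf]
  rw [this, h]; ring

private lemma Ncnt_zero (b : F) : Ncnt F 0 b = if b = 0 then 1 else 0 := by
  rw [Ncnt, Finset.card_filter]
  by_cases hb : b = 0 <;>
    simp [hb, eq_comm, Finset.card_univ]

private lemma Ncnt_succ' (hF2 : ringChar F ≠ 2) (n : ℕ) (a : F) :
    (Ncnt F (n + 1) a : ℤ) = ∑ b : F, (1 + quadraticChar F b) * (Ncnt F n (a - b) : ℤ) := by
  classical
  have key : Ncnt F (n + 1) a = ∑ y : F, Ncnt F n (a - y ^ 2) := by
    simp only [Ncnt, Finset.card_filter]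
    rw [← (Fin.consEquiv (fun _ : Fin (n + 1) => F)).sum_comp
      (fun x : Fin (n+1) → F => if ∑ i, x i ^ 2 = a then 1 else 0)]
    rw [Fintype.sum_prod_type]
    refine Finset.sum_congr rfl fun y _ => ?_
    refine Finset.sum_congr rfl fun z _ => ?_
    refine if_congr ?_ rfl rfl
    simp only [Fin.consEquiv_apply, Fin.sum_univ_succ, Fin.cons_zero, Fin.cons_succ]
    rw [eq_sub_iff_add_eq']
  have : (Ncnt F (n + 1) a : ℤ) = ∑ y : F, (Ncnt F n (a - y ^ 2) : ℤ) := by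
    rw [key]; push_cast; rfl
  rw [this, sum_sq_eq hF2 (fun b => (Ncnt F n (a - b) : ℤ))]

private lemma sum_char_shift (hF2 : ringChar F ≠ 2) (a : F) :
    ∑ b : F, (quadraticChar F (a - b) : ℤ) = 0 := by
  rw [Fintype.sum_equiv (Equiv.subLeft a) (fun b => (quadraticChar F (a - b) : ℤ))
    (fun b => (quadraticChar F b : ℤ)) (fun b => rfl)]
  exact_mod_cast quadraticChar_sum_zero hF2

private lemma sum_char_shift' (hF2 : ringChar F ≠ 2) :
    ∑ c : F, (quadraticChar F (c - 1) : ℤ) = 0 := by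
  rw [Fintype.sum_equiv (Equiv.subRight (1 : F)) (fun c => (quadraticChar F (c - 1) : ℤ))
    (fun b => (quadraticChar F b : ℤ)) (fun b => rfl)]
  exact_mod_cast quadraticChar_sum_zero hF2

private lemma jacobi (hF2 : ringChar F ≠ 2) (a : F) :
    ∑ b : F, (quadraticChar F b : ℤ) * quadraticChar F (a - b)
      = quadraticChar F (-1) * ((Fintype.card F : ℤ) * (if a = 0 then 1 else 0) - 1) := by
  rcases eq_or_ne a 0 with rfl | ha
  · have h1 : ∀ b : F, (quadraticChar F b : ℤ) * quadraticChar F (0 - b)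
        = quadraticChar F (-1) * (1 - (if b = 0 then 1 else 0)) := by
      intro b
      rcases eq_or_ne b 0 with rfl | hb
      · simp
      · have hb' : (0 : F) - b = (-1) * b := by ring
        rw [hb', map_mul, if_neg hb]
        push_cast
        rcases quadraticChar_dichotomy hb with h | h <;> rw [h] <;> ring
    rw [Finset.sum_congr rfl fun b _ => h1 b, ← Finset.mul_sum, if_pos rfl]
    congr 1
    rw [Finset.sum_sub_distrib, Finset.sum_const, Finset.sum_ite_eq' univ (0 : F) (fun _ => (1 : ℤ))]
    simp [Finset.card_univ, mul_comm]
  · rw [if_neg ha]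
    have key : ∀ b ∈ univ.erase (0 : F), (quadraticChar F b : ℤ) * quadraticChar F (a - b)
        = quadraticChar F (a * b⁻¹ - 1) := by
      intro b hb
      have hb0 : b ≠ 0 := (Finset.mem_erase.mp hb).1
      have hab : a - b = b * (a * b⁻¹ - 1) := by field_simp
      rw [hab, map_mul]
      push_cast
      rcases quadraticChar_dichotomy hb0 with h | h <;> rw [h] <;> ring
    rw [← Finset.sum_erase_add _ _ (Finset.mem_univ (0 : F))]
    have hz : (quadraticChar F (0 : F) : ℤ) * quadraticChar F (a - 0) = 0 := by simp
    rw [hz, add_zero, Finset.sum_congr rfl key]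
    have hbij : ∑ b ∈ univ.erase (0 : F), (quadraticChar F (a * b⁻¹ - 1) : ℤ)
        = ∑ c ∈ univ.erase (0 : F), (quadraticChar F (c - 1) : ℤ) := by
      refine Finset.sum_nbij' (fun b => a * b⁻¹) (fun c => a * c⁻¹) ?_ ?_ ?_ ?_ ?_
      · intro b hb
        have hb0 : b ≠ 0 := (Finset.mem_erase.mp hb).1
        exact Finset.mem_erase.mpr ⟨by simp [ha, hb0], Finset.mem_univ _⟩
      · intro c hc
        have hc0 : c ≠ 0 := (Finset.mem_erase.mp hc).1
        exact Finset.mem_erase.mpr ⟨by simp [ha, hc0], Finset.mem_univ _⟩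
      · intro b hb
        have hb0 : b ≠ 0 := (Finset.mem_erase.mp hb).1
        field_simp
      · intro c hc
        have hc0 : c ≠ 0 := (Finset.mem_erase.mp hc).1
        field_simp
      · intro b hb; rfl
    rw [hbij]
    have herase : ∑ c ∈ univ.erase (0 : F), (quadraticChar F (c - 1) : ℤ)
        = (∑ c : F, (quadraticChar F (c - 1) : ℤ)) - quadraticChar F ((0 : F) - 1) := by
      rw [← Finset.sum_erase_add _ _ (Finset.mem_univ (0 : F))]; ring
    rw [herase, sum_char_shift' hF2]
    have : ((0 : F) - 1) = (-1 : F) := by ring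
    rw [this]; ring

private lemma Ncnt_formula (hF2 : ringChar F ≠ 2) (s : ℕ) :
    (∀ a : F, (Ncnt F (2 * s + 1) a : ℤ) = (Fintype.card F : ℤ) ^ (2 * s)
        + (quadraticChar F (-1) : ℤ) ^ s * (Fintype.card F : ℤ) ^ s * quadraticChar F a)
    ∧ (∀ a : F, (Ncnt F (2 * s + 2) a : ℤ) = (Fintype.card F : ℤ) ^ (2 * s + 1)
        + (quadraticChar F (-1) : ℤ) ^ (s + 1) * (Fintype.card F : ℤ) ^ s
          * ((Fintype.card F : ℤ) * (if a = 0 then 1 else 0) - 1)) := by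
  have hchi0 : ∑ b : F, (quadraticChar F b : ℤ) = 0 := by
    exact_mod_cast quadraticChar_sum_zero hF2
  have stepOdd : ∀ s : ℕ,
      (∀ a : F, (Ncnt F (2 * s + 1) a : ℤ) = (Fintype.card F : ℤ) ^ (2 * s)
        + (quadraticChar F (-1) : ℤ) ^ s * (Fintype.card F : ℤ) ^ s * quadraticChar F a) →
      (∀ a : F, (Ncnt F (2 * s + 2) a : ℤ) = (Fintype.card F : ℤ) ^ (2 * s + 1)
        + (quadraticChar F (-1) : ℤ) ^ (s + 1) * (Fintype.card F : ℤ) ^ s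
          * ((Fintype.card F : ℤ) * (if a = 0 then 1 else 0) - 1)) := by
    intro s hodd a
    have : (2 * s + 2) = (2 * s + 1) + 1 := rfl
    rw [this, Ncnt_succ' hF2 (2 * s + 1) a]
    have expand : ∀ b : F,
        (1 + (quadraticChar F b : ℤ)) * (Ncnt F (2 * s + 1) (a - b) : ℤ)
        = (Fintype.card F : ℤ) ^ (2 * s)
          + (Fintype.card F : ℤ) ^ (2 * s) * quadraticChar F b
          + ((quadraticChar F (-1) : ℤ) ^ s * (Fintype.card F : ℤ) ^ s) * quadraticChar F (a - b)
          + ((quadraticChar F (-1) : ℤ) ^ s * (Fintype.card F : ℤ) ^ s)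
              * ((quadraticChar F b : ℤ) * quadraticChar F (a - b)) := by
      intro b; rw [hodd (a - b)]; ring
    rw [Finset.sum_congr rfl fun b _ => expand b]
    simp only [Finset.sum_add_distrib, ← Finset.mul_sum, hchi0, sum_char_shift hF2 a,
      jacobi hF2 a, Finset.sum_const, Finset.card_univ, nsmul_eq_mul, mul_zero, add_zero]
    ring
  have stepEven : ∀ s : ℕ,
      (∀ a : F, (Ncnt F (2 * s + 2) a : ℤ) = (Fintype.card F : ℤ) ^ (2 * s + 1)
        + (quadraticChar F (-1) : ℤ) ^ (s + 1) * (Fintype.card F : ℤ) ^ s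
          * ((Fintype.card F : ℤ) * (if a = 0 then 1 else 0) - 1)) →
      (∀ a : F, (Ncnt F (2 * (s + 1) + 1) a : ℤ) = (Fintype.card F : ℤ) ^ (2 * (s + 1))
        + (quadraticChar F (-1) : ℤ) ^ (s + 1) * (Fintype.card F : ℤ) ^ (s + 1)
          * quadraticChar F a) := by
    intro s heven a
    have h3 : 2 * (s + 1) + 1 = (2 * s + 2) + 1 := by ring
    rw [h3, Ncnt_succ' hF2 (2 * s + 2) a]
    have expand : ∀ b : F,
        (1 + (quadraticChar F b : ℤ)) * (Ncnt F (2 * s + 2) (a - b) : ℤ)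
        = (Fintype.card F : ℤ) ^ (2 * s + 1)
          + (Fintype.card F : ℤ) ^ (2 * s + 1) * quadraticChar F b
          + ((quadraticChar F (-1) : ℤ) ^ (s + 1) * (Fintype.card F : ℤ) ^ (s + 1))
              * (if b = a then 1 else 0)
          - (quadraticChar F (-1) : ℤ) ^ (s + 1) * (Fintype.card F : ℤ) ^ s
          + ((quadraticChar F (-1) : ℤ) ^ (s + 1) * (Fintype.card F : ℤ) ^ (s + 1))
              * (if b = a then (quadraticChar F b : ℤ) else 0)
          - ((quadraticChar F (-1) : ℤ) ^ (s + 1) * (Fintype.card F : ℤ) ^ s)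
              * quadraticChar F b := by
      intro b
      rw [heven (a - b)]
      rcases eq_or_ne b a with rfl | hb
      · simp only [sub_self, if_pos rfl, ite_true]
        ring
      · have h1 : a - b ≠ 0 := sub_ne_zero.mpr (Ne.symm hb)
        rw [if_neg h1, if_neg hb, if_neg hb]
        ring
    rw [Finset.sum_congr rfl fun b _ => expand b]
    have e1 : ∑ b : F, (if b = a then (1 : ℤ) else 0) = 1 := by simp
    have e2 : ∑ b : F, (if b = a then (quadraticChar F b : ℤ) else 0)
        = quadraticChar F a := by simp
    simp only [Finset.sum_sub_distrib, Finset.sum_add_distrib, ← Finset.mul_sum, hchi0, e1, e2,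
      Finset.sum_const, Finset.card_univ, nsmul_eq_mul, mul_zero, mul_one, sub_zero, add_zero,
      zero_add]
    ring
  induction s with
  | zero =>
    have base : ∀ a : F, (Ncnt F (2 * 0 + 1) a : ℤ) = (Fintype.card F : ℤ) ^ (2 * 0)
        + (quadraticChar F (-1) : ℤ) ^ 0 * (Fintype.card F : ℤ) ^ 0 * quadraticChar F a := by
      intro a
      have h1 : (2 * 0 + 1 : ℕ) = 0 + 1 := rfl
      rw [h1, Ncnt_succ' hF2 0 a]
      have expand : ∀ b : F, (1 + (quadraticChar F b : ℤ)) * (Ncnt F 0 (a - b) : ℤ)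
          = if b = a then 1 + (quadraticChar F b : ℤ) else 0 := by
        intro b
        rw [Ncnt_zero (a - b)]
        rcases eq_or_ne b a with rfl | hb
        · simp
        · have h1 : a - b ≠ 0 := sub_ne_zero.mpr (Ne.symm hb)
          rw [if_neg h1, if_neg hb]
          push_cast
          ring
      rw [Finset.sum_congr rfl fun b _ => expand b,
        Finset.sum_ite_eq' univ a (fun b => 1 + (quadraticChar F b : ℤ))]
      simp
    exact ⟨base, stepOdd 0 base⟩
  | succ s ih =>
    have h1 := stepEven s ih.2
    exact ⟨h1, stepOdd (s + 1) h1⟩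

private lemma nonsquare_facts (hF2 : ringChar F ≠ 2) :
    2 * ((univ.filter fun a : F => ¬ IsSquare a).card : ℤ) = (Fintype.card F : ℤ) - 1 := by
  have hsplit := Finset.sum_filter_add_sum_filter_not univ (fun a : F => IsSquare a)
    (fun a => (quadraticChar F a : ℤ))
  have hzero : ∑ a : F, (quadraticChar F a : ℤ) = 0 := by
    exact_mod_cast quadraticChar_sum_zero hF2
  have h0sq : (0 : F) ∈ univ.filter fun a : F => IsSquare a := by
    simp [Finset.mem_filter]
  have hsq : ∑ a ∈ univ.filter (fun a : F => IsSquare a), (quadraticChar F a : ℤ)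
      = ((univ.filter fun a : F => IsSquare a).card : ℤ) - 1 := by
    rw [← Finset.sum_erase_add _ _ h0sq]
    have h1 : ∀ a ∈ (univ.filter fun a : F => IsSquare a).erase 0,
        (quadraticChar F a : ℤ) = 1 := by
      intro a ha
      have h2 := Finset.mem_erase.mp ha
      have h3 := (Finset.mem_filter.mp h2.2).2
      exact_mod_cast quadraticChar_one_iff_isSquare (a := a) h2.1 |>.mpr h3
    rw [Finset.sum_congr rfl h1, Finset.sum_const, Finset.card_erase_of_mem h0sq]
    have hpos : 1 ≤ (univ.filter fun a : F => IsSquare a).card :=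
      Finset.card_pos.mpr ⟨0, h0sq⟩
    simp only [nsmul_eq_mul, mul_one, MulChar.map_zero, Int.cast_zero]
    push_cast [hpos]
    ring
  have hnsq : ∑ a ∈ univ.filter (fun a : F => ¬ IsSquare a), (quadraticChar F a : ℤ)
      = -((univ.filter fun a : F => ¬ IsSquare a).card : ℤ) := by
    have h1 : ∀ a ∈ univ.filter fun a : F => ¬ IsSquare a,
        (quadraticChar F a : ℤ) = -1 := by
      intro a ha
      exact_mod_cast quadraticChar_neg_one_iff_not_isSquare.mpr (Finset.mem_filter.mp ha).2
    rw [Finset.sum_congr rfl h1, Finset.sum_const]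
    simp
  have hcards := Finset.card_filter_add_card_filter_not (s := (univ : Finset F))
    (p := fun a : F => IsSquare a)
  rw [Finset.card_univ] at hcards
  have := hsplit
  rw [hsq, hnsq, hzero] at this
  have hc : ((univ.filter fun a : F => IsSquare a).card : ℤ)
      + ((univ.filter fun a : F => ¬ IsSquare a).card : ℤ) = (Fintype.card F : ℤ) := by
    exact_mod_cast congrArg (Nat.cast : ℕ → ℤ) hcards
  linarith

private lemma Sminus_card (n : ℕ) :
    ({x : Fin n → F | ¬ IsSquare (∑ i, x i ^ 2)}.ncard : ℤ)
      = ∑ a ∈ univ.filter (fun a : F => ¬ IsSquare a), (Ncnt F n a : ℤ) := by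
  classical
  rw [Set.ncard_eq_toFinset_card', Set.toFinset_setOf]
  have h1 : ((univ.filter fun x : Fin n → F => ¬ IsSquare (∑ i, x i ^ 2)).card : ℤ)
      = ∑ x : Fin n → F, (fun a => if ¬ IsSquare a then (1 : ℤ) else 0) (∑ i, x i ^ 2) := by
    rw [Finset.card_filter]
    push_cast
    rfl
  rw [h1, sum_comp_eq (fun x : Fin n → F => ∑ i, x i ^ 2)
    (fun a => if ¬ IsSquare a then (1 : ℤ) else 0)]
  rw [Finset.sum_filter]
  refine Finset.sum_congr rfl fun a _ => ?_
  by_cases ha : IsSquare a <;> simp [ha, Ncnt]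

private lemma ceil_odd_case (s : ℕ) : ⌈(((2 * s + 1 : ℕ) : ℚ) - 2) / 2⌉ = (s : ℤ) := by
  rw [Int.ceil_eq_iff]
  refine ⟨?_, ?_⟩ <;> push_cast <;> linarith

private lemma ceil_even_case (s : ℕ) : ⌈(((2 * s + 2 : ℕ) : ℚ) - 2) / 2⌉ = (s : ℤ) := by
  have : (((2 * s + 2 : ℕ) : ℚ) - 2) / 2 = (s : ℚ) := by push_cast; ring
  rw [this, Int.ceil_natCast]

private lemma final_step (p h q s r : ℕ) (hp : p.Prime) (hq : q = p ^ h)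
    (hq2 : 2 ≤ q) (hr : 1 ≤ r) (e : ℤ) (he : e = 1 ∨ e = -1) (M C m : ℕ)
    (hm : m = h * s) (hM : 2 * (M : ℤ) = (q : ℤ) - 1)
    (hC : (C : ℤ) = (M : ℤ) * (q : ℤ) ^ s * ((q : ℤ) ^ r - e)) :
    ∃ k : ℕ, C = p ^ m * k ∧ ¬ (p ∣ k) ∧
      ((2 * (k : ℤ)) ≡ 1 [ZMOD (q : ℤ)] ∨ (2 * (k : ℤ)) ≡ -1 [ZMOD (q : ℤ)]) := by
  have hh : h ≠ 0 := by rintro rfl; simp [hq] at hq2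
  have hpq : (p : ℤ) ∣ (q : ℤ) := by
    exact_mod_cast Int.natCast_dvd_natCast.mpr (hq ▸ dvd_pow_self p hh)
  have hqm : ((p : ℤ)) ^ m = (q : ℤ) ^ s := by
    rw [hm, pow_mul]
    norm_cast
    rw [hq]
  -- the natural number k
  obtain ⟨k, hk⟩ : ∃ k : ℕ, (k : ℤ) = (M : ℤ) * ((q : ℤ) ^ r - e) := by
    rcases he with rfl | rfl
    · refine ⟨M * (q ^ r - 1), ?_⟩
      have h1 : 1 ≤ q ^ r := Nat.one_le_pow _ _ (by omega)
      push_cast [h1]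
      ring
    · exact ⟨M * (q ^ r + 1), by push_cast; ring⟩
  refine ⟨k, ?_, ?_, ?_⟩
  · have : (C : ℤ) = ((p ^ m * k : ℕ) : ℤ) := by
      push_cast
      rw [hk, hC]
      rw [show ((p : ℤ)) ^ m = (q : ℤ) ^ s from hqm]
      ring
    exact_mod_cast this
  · intro hpk
    have h2k : 2 * (k : ℤ) = ((q : ℤ) - 1) * ((q : ℤ) ^ r - e) := by
      rw [hk]; linear_combination ((q : ℤ) ^ r - e) * hM
    have hqr : (p : ℤ) ∣ (q : ℤ) ^ r := dvd_pow hpq (by omega)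
    have hd1 : (p : ℤ) ∣ 2 * (k : ℤ) - e := by
      rw [h2k, show ((q : ℤ) - 1) * ((q : ℤ) ^ r - e) - e
        = (q : ℤ) * ((q : ℤ) ^ r - e) - (q : ℤ) ^ r from by ring]
      exact dvd_sub (hpq.mul_right _) hqr
    have hd2 : (p : ℤ) ∣ 2 * (k : ℤ) := by
      exact Dvd.dvd.mul_left (Int.natCast_dvd_natCast.mpr hpk) 2
    have hde : (p : ℤ) ∣ e := by
      have := dvd_sub hd2 hd1
      simpa using this
    have : (p : ℤ) ∣ 1 := by
      rcases he with rfl | rfl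
      · exact hde
      · exact (dvd_neg.mp hde)
    have hple := Int.le_of_dvd one_pos this
    have := hp.two_le
    omega
  · have h2k : 2 * (k : ℤ) = ((q : ℤ) - 1) * ((q : ℤ) ^ r - e) := by
      rw [hk]; linear_combination ((q : ℤ) ^ r - e) * hM
    have hqr : (q : ℤ) ∣ (q : ℤ) ^ r := dvd_pow_self _ (by omega)
    have hd1 : (q : ℤ) ∣ 2 * (k : ℤ) - e := by
      rw [h2k, show ((q : ℤ) - 1) * ((q : ℤ) ^ r - e) - e
        = (q : ℤ) * ((q : ℤ) ^ r - e) - (q : ℤ) ^ r from by ring]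
      exact dvd_sub (Dvd.intro _ rfl) hqr
    have hmod : (2 * (k : ℤ)) ≡ e [ZMOD (q : ℤ)] := by
      rw [Int.modEq_iff_dvd]
      have he2 : e - 2 * (k : ℤ) = -(2 * (k : ℤ) - e) := by ring
      rw [he2]
      exact dvd_neg.mpr hd1
    rcases he with rfl | rfl
    · exact Or.inl hmod
    · exact Or.inr hmod

end aux

/-- Let `p` be an odd prime, `q = p^h`, `n ≥ 3`, and
`m = h·⌈(n-2)/2⌉`. Then `p^m` exactly divides `|S_-|` (i.e. `|S_-| = p^m·k`
with `p ∤ k`) and `2·|S_-|/p^m ≡ ±1 (mod q)`. -/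
theorem Sminus_card_p_adic
    (p h n : ℕ) (hp : p.Prime) (hodd : Odd p) (hn : 3 ≤ n)
    (q : ℕ) (hq : q = p ^ h)
    (F : Type) [Field F] [Fintype F] (hF : Fintype.card F = q)
    (m : ℕ) (hm : (m : ℚ) = (h : ℚ) * ⌈((n : ℚ) - 2) / 2⌉) :
    ∃ k : ℕ,
      {x : Fin n → F | ¬ IsSquare (∑ i, x i ^ 2)}.ncard = p ^ m * k ∧
      ¬ (p ∣ k) ∧
      ((2 * (k : ℤ)) ≡ 1 [ZMOD (q : ℤ)] ∨ (2 * (k : ℤ)) ≡ -1 [ZMOD (q : ℤ)]) := by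
  classical
  have hF2 : ringChar F ≠ 2 := by
    intro h2
    have he := FiniteField.even_card_of_char_two h2
    rw [hF, hq] at he
    have hoddq := Nat.odd_iff.mp (hodd.pow (n := h))
    omega
  have hq2 : 2 ≤ q := hF ▸ Fintype.one_lt_card
  have hMq : 2 * (((univ.filter fun a : F => ¬ IsSquare a)).card : ℤ) = (q : ℤ) - 1 := by
    have := nonsquare_facts (F := F) hF2
    rwa [hF] at this
  have hMchi : ∑ a ∈ (univ.filter fun a : F => ¬ IsSquare a), (quadraticChar F a : ℤ)
      = -(((univ.filter fun a : F => ¬ IsSquare a)).card : ℤ) := by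
    have h1 : ∀ a ∈ univ.filter fun a : F => ¬ IsSquare a, (quadraticChar F a : ℤ) = -1 :=
      fun a ha => by
        exact_mod_cast quadraticChar_neg_one_iff_not_isSquare.mpr (Finset.mem_filter.mp ha).2
    rw [Finset.sum_congr rfl h1, Finset.sum_const]
    simp
  have hne : (-1 : F) ≠ 0 := by
    intro h0
    exact one_ne_zero (α := F) (by linear_combination -h0)
  have heps := quadraticChar_dichotomy (F := F) hne
  have hzsq : ∀ a : F, a ∈ univ.filter (fun a : F => ¬ IsSquare a) → a ≠ 0 := by
    intro a ha h0
    exact (Finset.mem_filter.mp ha).2 (h0 ▸ (⟨0, by ring⟩ : IsSquare (0 : F)))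
  rcases Nat.even_or_odd n with hev | hod
  · -- even case : n = 2*s+2
    obtain ⟨s, rfl⟩ : ∃ s, n = 2 * s + 2 := ⟨n / 2 - 1, by
      have := Nat.even_iff.mp hev; omega⟩
    have hceil : ⌈(((2 * s + 2 : ℕ) : ℚ) - 2) / 2⌉ = (s : ℤ) := ceil_even_case s
    have hms : m = h * s := by
      rw [hceil] at hm
      have h2 : (m : ℚ) = ((h * s : ℕ) : ℚ) := by rw [hm]; push_cast; ring
      exact_mod_cast h2
    have hform := (Ncnt_formula (F := F) hF2 s).2
    have hterm : ∀ a ∈ univ.filter (fun a : F => ¬ IsSquare a),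
        (Ncnt F (2 * s + 2) a : ℤ)
          = (q : ℤ) ^ (2 * s + 1) - (quadraticChar F (-1) : ℤ) ^ (s + 1) * (q : ℤ) ^ s := by
      intro a ha
      rw [hform a, if_neg (hzsq a ha), hF]
      ring
    have habs : (({x : Fin (2 * s + 2) → F | ¬ IsSquare (∑ i, x i ^ 2)}.ncard : ℤ))
        = (((univ.filter fun a : F => ¬ IsSquare a)).card : ℤ) * (q : ℤ) ^ s
          * ((q : ℤ) ^ (s + 1) - (quadraticChar F (-1) : ℤ) ^ (s + 1)) := by
      rw [Sminus_card (2 * s + 2), Finset.sum_congr rfl hterm, Finset.sum_sub_distrib,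
        Finset.sum_const, nsmul_eq_mul, Finset.sum_const, nsmul_eq_mul]
      ring
    have he : (quadraticChar F (-1) : ℤ) ^ (s + 1) = 1
        ∨ (quadraticChar F (-1) : ℤ) ^ (s + 1) = -1 := by
      rcases heps with h1 | h1
      · left; rw [h1]; exact one_pow _
      · rw [h1]
        rcases Nat.even_or_odd (s + 1) with h2 | h2
        · left; exact h2.neg_one_pow
        · right; exact h2.neg_one_pow
    have hr1 : 1 ≤ s + 1 := Nat.succ_le_succ (Nat.zero_le s)
    exact final_step p h q s (s + 1) hp hq hq2 hr1
      ((quadraticChar F (-1) : ℤ) ^ (s + 1)) he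
      ((univ.filter fun a : F => ¬ IsSquare a)).card
      ({x : Fin (2 * s + 2) → F | ¬ IsSquare (∑ i, x i ^ 2)}.ncard) m hms hMq habs
  · -- odd case : n = 2*s+1 with s ≥ 1
    obtain ⟨s, rfl⟩ : ∃ s, n = 2 * s + 1 := ⟨n / 2, by
      have := Nat.odd_iff.mp hod; omega⟩
    have hs1 : 1 ≤ s := by omega
    have hceil : ⌈(((2 * s + 1 : ℕ) : ℚ) - 2) / 2⌉ = (s : ℤ) := ceil_odd_case s
    have hms : m = h * s := by
      rw [hceil] at hm
      have h2 : (m : ℚ) = ((h * s : ℕ) : ℚ) := by rw [hm]; push_cast; ring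
      exact_mod_cast h2
    have hform := (Ncnt_formula (F := F) hF2 s).1
    have hterm : ∀ a ∈ univ.filter (fun a : F => ¬ IsSquare a),
        (Ncnt F (2 * s + 1) a : ℤ)
          = (q : ℤ) ^ (2 * s)
            + ((quadraticChar F (-1) : ℤ) ^ s * (q : ℤ) ^ s) * (quadraticChar F a : ℤ) := by
      intro a ha
      rw [hform a, hF]
    have habs : (({x : Fin (2 * s + 1) → F | ¬ IsSquare (∑ i, x i ^ 2)}.ncard : ℤ))
        = (((univ.filter fun a : F => ¬ IsSquare a)).card : ℤ) * (q : ℤ) ^ s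
          * ((q : ℤ) ^ s - (quadraticChar F (-1) : ℤ) ^ s) := by
      rw [Sminus_card (2 * s + 1), Finset.sum_congr rfl hterm, Finset.sum_add_distrib,
        Finset.sum_const, nsmul_eq_mul, ← Finset.mul_sum, hMchi]
      ring
    have he : (quadraticChar F (-1) : ℤ) ^ s = 1
        ∨ (quadraticChar F (-1) : ℤ) ^ s = -1 := by
      rcases heps with h1 | h1
      · left; rw [h1]; exact one_pow _
      · rw [h1]
        rcases Nat.even_or_odd s with h2 | h2
        · left; exact h2.neg_one_pow
        · right; exact h2.neg_one_pow
    exact final_step p h q s s hp hq hq2 hs1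
      ((quadraticChar F (-1) : ℤ) ^ s) he
      ((univ.filter fun a : F => ¬ IsSquare a)).card
      ({x : Fin (2 * s + 1) → F | ¬ IsSquare (∑ i, x i ^ 2)}.ncard) m hms hMq habs
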